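/- arXiv:1707.09746 — 5 statements merged into one kernel-verified Lean document; each statement's English description precedes it below -/
import Mathlib

section
/- Let G be a finite p-group in which every conjugacy class has size 1 or pⁿ (and some class has size pⁿ, n ≥ 1), and suppose Z(G) = [G,G]. Then both G/Z(G) and [G,G] are elementary abelian p-groups. -/
section AuxCamina

variable {G : Type*} [Group G]

open scoped commutatorElement

/-- In a group where all commutators are central, `g ↦ ⁅g, x⁆` is a homomorphism. -/
def commHomAux (x : G) (hc : ∀ a b : G, ⁅a, b⁆ ∈ Subgroup.center G) : G →* G where
  toFun g := ⁅g, x⁆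
  map_one' := by group
  map_mul' g h := by
    have key : ∀ b : G, b * ⁅h, x⁆ = ⁅h, x⁆ * b := fun b =>
      Subgroup.mem_center_iff.mp (hc h x) b
    show ⁅g * h, x⁆ = ⁅g, x⁆ * ⁅h, x⁆
    have h1 : ⁅g * h, x⁆ = g * ⁅h, x⁆ * g⁻¹ * ⁅g, x⁆ := by group
    rw [h1, key g, mul_inv_cancel_right, ← key]

theorem comm_pow_left (hc : ∀ a b : G, ⁅a, b⁆ ∈ Subgroup.center G) (x g : G) (k : ℕ) :
    ⁅x ^ k, g⁆ = ⁅x, g⁆ ^ k := map_pow (commHomAux g hc) x k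

theorem comm_pow_right (hc : ∀ a b : G, ⁅a, b⁆ ∈ Subgroup.center G) (x g : G) (k : ℕ) :
    ⁅g, x ^ k⁆ = ⁅g, x⁆ ^ k := by
  calc ⁅g, x ^ k⁆ = ⁅x ^ k, g⁆⁻¹ := (commutatorElement_inv _ _).symm
    _ = (⁅x, g⁆ ^ k)⁻¹ := by rw [comm_pow_left hc]
    _ = (⁅x, g⁆⁻¹) ^ k := (inv_pow _ _).symm
    _ = ⁅g, x⁆ ^ k := by rw [commutatorElement_inv]

end AuxCamina

/-- The conjugacy class of `x` in a group. -/
def conjClass {G : Type*} [Group G] (x : G) : Set G := {y | ∃ g : G, g⁻¹ * x * g = y}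

/-- `G` is of conjugate type `{1, m}`: every conjugacy class has size `1` or `m`,
and some class has size `m`. -/
def IsConjugateType (G : Type*) [Group G] (m : ℕ) : Prop :=
  (∀ x : G, Nat.card (conjClass x) = 1 ∨ Nat.card (conjClass x) = m) ∧
  (∃ x : G, Nat.card (conjClass x) = m)

/-- `G` is a Camina group: the class of every `x ∉ G'` is the coset `xG'`. -/
def IsCamina (G : Type*) [Group G] : Prop :=
  ∀ x : G, x ∉ commutator G → conjClass x = (fun c => x * c) '' (commutator G : Set G)

open scoped commutatorElement

/-- Two groups are isoclinic. -/
def Isoclinic (G H : Type*) [Group G] [Group H] : Prop :=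
  ∃ (φ : (G ⧸ Subgroup.center G) ≃* (H ⧸ Subgroup.center H))
    (θ : (commutator G) ≃* (commutator H)),
    ∀ (x y : G) (x' y' : H),
      φ (QuotientGroup.mk x) = QuotientGroup.mk x' →
      φ (QuotientGroup.mk y) = QuotientGroup.mk y' →
      (θ ⟨⁅x, y⁆, Subgroup.commutator_mem_commutator (Subgroup.mem_top x) (Subgroup.mem_top y)⟩ : H) = ⁅x', y'⁆

/-- If a finite p-group of conjugate type {1, pⁿ} has Z(G) = [G,G], then both G/Z(G)
and [G,G] are elementary abelian. -/
theorem quotient_and_commutator_elementary_abelian {p n : ℕ} [Fact p.Prime] (hn : 1 ≤ n)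
    {G : Type*} [Group G] [Finite G] (hG : IsPGroup p G)
    (ht : IsConjugateType G (p ^ n)) (hz : Subgroup.center G = commutator G) :
    ((∀ a b : G ⧸ Subgroup.center G, a * b = b * a) ∧
      (∀ a : G ⧸ Subgroup.center G, a ^ p = 1)) ∧
    ((∀ a b : commutator G, a * b = b * a) ∧ (∀ a : commutator G, a ^ p = 1)) := by
  classical
  -- all commutators are central
  have hc : ∀ a b : G, ⁅a, b⁆ ∈ Subgroup.center G := by
    intro a b
    rw [hz]
    exact Subgroup.commutator_mem_commutator (Subgroup.mem_top a) (Subgroup.mem_top b)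
  -- the conjugacy class of `x` has the same size as the set of commutators with `x`
  have hcard : ∀ x : G, Nat.card (conjClass x) = Nat.card (Set.range fun g : G => ⁅g, x⁆) := by
    intro x
    have himg : conjClass x = (fun c => c * x) '' (Set.range fun g : G => ⁅g, x⁆) := by
      ext y
      constructor
      · rintro ⟨g, rfl⟩
        exact ⟨⁅g⁻¹, x⁆, ⟨g⁻¹, rfl⟩, by group⟩
      · rintro ⟨_, ⟨g, rfl⟩, rfl⟩
        exact ⟨g⁻¹, by group⟩
    rw [himg, Nat.card_image_of_injective (mul_left_injective x)]
  -- noncentral elements have commutator sets of size p^n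
  have hnc : ∀ x : G, x ∉ Subgroup.center G →
      Nat.card (Set.range fun g : G => ⁅g, x⁆) = p ^ n := by
    intro x hx
    rcases ht.1 x with h1 | h1
    · exfalso
      apply hx
      obtain ⟨a, hall⟩ := Nat.card_eq_one_iff_exists.mp h1
      rw [Subgroup.mem_center_iff]
      intro g
      have hxm : x ∈ conjClass x := ⟨1, by group⟩
      have hgm : g⁻¹ * x * g ∈ conjClass x := ⟨g, rfl⟩
      have heq : (⟨g⁻¹ * x * g, hgm⟩ : conjClass x) = ⟨x, hxm⟩ :=
        (hall _).trans (hall _).symm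
      have h2 : g⁻¹ * x * g = x := congrArg Subtype.val heq
      have h3 := congrArg (fun t => g * t) h2
      simpa [mul_assoc] using h3.symm
    · rw [hcard x] at h1
      exact h1
  -- p-th powers are central
  have hpc : ∀ x : G, x ^ p ∈ Subgroup.center G := by
    intro x
    by_contra hxp
    have hxc : x ∉ Subgroup.center G := fun h => hxp (pow_mem h p)
    have c1 : Nat.card (Set.range fun g : G => ⁅g, x⁆) = p ^ n := hnc x hxc
    have c2 : Nat.card (Set.range fun g : G => ⁅g, x ^ p⁆) = p ^ n := hnc _ hxp
    set S : Set G := Set.range fun g : G => ⁅g, x⁆ with hS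
    set T : Set G := Set.range fun g : G => ⁅g, x ^ p⁆ with hT
    have hmap : ∀ s ∈ S, s ^ p ∈ T := by
      rintro _ ⟨g, rfl⟩
      exact ⟨g, comm_pow_right hc x g p⟩
    let f : S → T := fun s => ⟨(s : G) ^ p, hmap s s.2⟩
    have hsurj : Function.Surjective f := by
      rintro ⟨_, g, rfl⟩
      exact ⟨⟨⁅g, x⁆, ⟨g, rfl⟩⟩, Subtype.ext (comm_pow_right hc x g p).symm⟩
    have hbij : Function.Bijective f :=
      (Nat.bijective_iff_surjective_and_card f).mpr ⟨hsurj, by rw [c1, c2]⟩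
    -- the commutator set with x is a subgroup containing an element of order p
    have hKS : ((commHomAux x hc).range : Set G) = S := by
      rw [MonoidHom.coe_range]; rfl
    have hcardK : Nat.card (commHomAux x hc).range = p ^ n := by
      rw [← c1, ← hKS]; rfl
    obtain ⟨z, hzo⟩ := exists_prime_orderOf_dvd_card' (G := (commHomAux x hc).range) p
      (hcardK ▸ dvd_pow_self p (Nat.one_le_iff_ne_zero.mp hn))
    have hz1 : (z : G) ^ p = 1 := by
      have h4 : z ^ p = 1 := by rw [← hzo]; exact pow_orderOf_eq_one z
      simpa using congrArg Subtype.val h4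
    have hzne : (z : G) ≠ 1 := by
      intro h
      have h5 : z = 1 := Subtype.ext h
      rw [h5, orderOf_one] at hzo
      exact (Fact.out : p.Prime).one_lt.ne' hzo.symm
    have hzS : (z : G) ∈ S := by rw [← hKS]; exact z.2
    have h1S : (1 : G) ∈ S := ⟨1, by group⟩
    have hfz : f ⟨(z : G), hzS⟩ = f ⟨1, h1S⟩ := Subtype.ext (by simp [f, hz1])
    exact hzne (congrArg Subtype.val (hbij.1 hfz))
  refine ⟨⟨?_, ?_⟩, ?_, ?_⟩
  · intro a b
    refine QuotientGroup.induction_on a fun x => ?_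
    refine QuotientGroup.induction_on b fun y => ?_
    rw [← QuotientGroup.mk_mul, ← QuotientGroup.mk_mul, QuotientGroup.eq]
    have h4 : (x * y)⁻¹ * (y * x) = ⁅y⁻¹, x⁻¹⁆ := by group
    rw [h4]
    exact hc _ _
  · intro a
    refine QuotientGroup.induction_on a fun x => ?_
    rw [← QuotientGroup.mk_pow, QuotientGroup.eq_one_iff]
    exact hpc x
  · intro a b
    apply Subtype.ext
    have ha : (a : G) ∈ Subgroup.center G := by rw [hz]; exact a.2
    push_cast
    exact (Subgroup.mem_center_iff.mp ha b).symm
  · have key : ∀ g ∈ commutator G, g ^ p = 1 := by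
      intro g hg
      rw [commutator_eq_closure] at hg
      induction hg using Subgroup.closure_induction with
      | mem y hy =>
        obtain ⟨u, v, rfl⟩ := hy
        rw [← comm_pow_left hc]
        exact commutatorElement_eq_one_iff_commute.mpr
          ((Subgroup.mem_center_iff.mp (hpc u) v).symm)
      | one => exact one_pow p
      | mul y w hy hw ihy ihw =>
        have hyc : y ∈ Subgroup.center G := by
          rw [hz, commutator_eq_closure]; exact hy
        have hcom : Commute y w := (Subgroup.mem_center_iff.mp hyc w).symm
        rw [hcom.mul_pow, ihy, ihw, one_mul]
      | inv y hy ihy => rw [inv_pow, ihy, inv_one]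
    intro a
    apply Subtype.ext
    push_cast
    exact key (a : G) a.2
end

section
/- Let G be a finite p-group of conjugate type {1, p³} and suppose there exists a normal subgroup H of G of order p with [G/H : Z(G/H)] = p³. Then a contradiction follows; i.e., no such normal subgroup H exists. -/
open scoped commutatorElement

theorem conjClass_eq_orbit {G : Type*} [Group G] (x : G) :
    conjClass x = MulAction.orbit (ConjAct G) x := by
  ext y
  simp only [MulAction.mem_orbit_iff]
  constructor
  · rintro ⟨g, rfl⟩
    exact ⟨ConjAct.toConjAct g⁻¹, by simp [ConjAct.smul_def]⟩
  · rintro ⟨g, rfl⟩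
    exact ⟨(ConjAct.ofConjAct g)⁻¹, by simp [ConjAct.smul_def]⟩

theorem card_conjClass {G : Type*} [Group G] (x : G) :
    Nat.card (conjClass x) = (Subgroup.centralizer {x}).index := by
  rw [conjClass_eq_orbit,
    Nat.card_eq_of_bijective _ (MulAction.orbitEquivQuotientStabilizer (ConjAct G) x).bijective,
    Subgroup.centralizer_eq_comap_stabilizer]
  exact (Subgroup.index_comap_of_surjective (MulAction.stabilizer (ConjAct G) x)
    (f := ConjAct.toConjAct.toMonoidHom) ConjAct.toConjAct.surjective).symm

theorem mem_conjClass_self {G : Type*} [Group G] (x : G) : x ∈ conjClass x :=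
  ⟨1, by simp⟩

/-- In a finite p-group of conjugate type {1, p³} there is no normal subgroup H of
order p with [G/H : Z(G/H)] = p³. -/
theorem no_small_central_quotient {p : ℕ} [Fact p.Prime] {G : Type*} [Group G] [Finite G]
    (hG : IsPGroup p G) (ht : IsConjugateType G (p ^ 3))
    (H : Subgroup G) [H.Normal] (hH : Nat.card H = p)
    (hidx : (Subgroup.center (G ⧸ H)).index = p ^ 3) : False := by
  have hp : p.Prime := Fact.out
  have hp3 : p < p ^ 3 := by
    calc p = p ^ 1 := (pow_one p).symm
    _ < p ^ 3 := Nat.pow_lt_pow_right hp.one_lt (by norm_num)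
  -- Step 1: the preimage of Z(G/H) is contained in Z(G)
  have key : ∀ x : G, ((x : G ⧸ H) ∈ Subgroup.center (G ⧸ H)) → x ∈ Subgroup.center G := by
    intro x hx
    -- the conjugacy class of x is contained in the coset x*H
    have hsub : conjClass x ⊆ (fun c => x * c) '' (H : Set G) := by
      rintro y ⟨g, rfl⟩
      have h1 : ((g⁻¹ * x * g : G) : G ⧸ H) = (x : G ⧸ H) := by
        have hcomm := (Subgroup.mem_center_iff.mp hx) (g : G ⧸ H)
        rw [QuotientGroup.mk_mul, QuotientGroup.mk_mul, QuotientGroup.mk_inv,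
          mul_assoc, ← hcomm, ← mul_assoc, inv_mul_cancel, one_mul]
      have h2 : x⁻¹ * (g⁻¹ * x * g) ∈ H := by
        rw [← QuotientGroup.eq_one_iff, QuotientGroup.mk_mul, h1, QuotientGroup.mk_inv,
          inv_mul_cancel]
      exact ⟨x⁻¹ * (g⁻¹ * x * g), h2, by group⟩
    have hcard : Nat.card (conjClass x) ≤ p := by
      have h3 : (conjClass x).ncard ≤ ((fun c => x * c) '' (H : Set G)).ncard :=
        Set.ncard_le_ncard hsub (Set.toFinite _)
      have h4 : ((fun c => x * c) '' (H : Set G)).ncard = p := by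
        rw [Set.ncard_image_of_injective _ (mul_right_injective x),
          ← Nat.card_coe_set_eq]
        exact hH
      rw [Nat.card_coe_set_eq]
      omega
    have h1 : Nat.card (conjClass x) = 1 := by
      rcases ht.1 x with h | h
      · exact h
      · omega
    have hsing : Subsingleton (conjClass x) := (Nat.card_eq_one_iff_unique.mp h1).1
    rw [Subgroup.mem_center_iff]
    intro g
    have : (⟨g⁻¹ * x * g, ⟨g, rfl⟩⟩ : conjClass x) = ⟨x, mem_conjClass_self x⟩ :=
      hsing.elim _ _
    have h5 : g⁻¹ * x * g = x := congrArg Subtype.val this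
    calc g * x = g * (g⁻¹ * x * g) := by rw [h5]
    _ = x * g := by group
  -- Step 2: the index of the center of G divides p^3
  have hNidx : ((Subgroup.center (G ⧸ H)).comap (QuotientGroup.mk' H)).index = p ^ 3 := by
    rw [Subgroup.index_comap_of_surjective _ (QuotientGroup.mk'_surjective H)]
    exact hidx
  have hNle : (Subgroup.center (G ⧸ H)).comap (QuotientGroup.mk' H) ≤ Subgroup.center G :=
    fun x hx => key x hx
  have hZdvd : (Subgroup.center G).index ∣ p ^ 3 :=
    hNidx ▸ Subgroup.index_dvd_of_le hNle
  -- Step 3: take an element with class of size p^3 and derive a contradiction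
  obtain ⟨x, hx⟩ := ht.2
  have hxC : x ∈ Subgroup.centralizer {x} :=
    Subgroup.mem_centralizer_iff.mpr (by
      intro y hy; simp only [Set.mem_singleton_iff] at hy; subst hy; rfl)
  have hle : Subgroup.center G ≤ Subgroup.centralizer {x} := fun g hg =>
    Subgroup.mem_centralizer_iff.mpr (by
      intro y hy; simp only [Set.mem_singleton_iff] at hy; subst hy
      exact Subgroup.mem_center_iff.mp hg _)
  have hC : (Subgroup.centralizer {x}).index = p ^ 3 := by
    rw [← card_conjClass]; exact hx
  have hCdvd : (Subgroup.centralizer {x}).index ∣ (Subgroup.center G).index :=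
    Subgroup.index_dvd_of_le hle
  have heq : (Subgroup.centralizer {x}).index = (Subgroup.center G).index :=
    Nat.dvd_antisymm hCdvd (hC ▸ hZdvd)
  have hrel := Subgroup.relIndex_mul_index hle
  have hC0 : (Subgroup.centralizer {x}).index ≠ 0 := by
    rw [hC]; exact (Nat.pow_pos (n := 3) hp.pos).ne'
  have hrel1 : (Subgroup.center G).relIndex (Subgroup.centralizer {x}) = 1 := by
    rw [← heq] at hrel
    exact Nat.eq_of_mul_eq_mul_right (Nat.pos_of_ne_zero hC0) (by omega)
  have hCle : Subgroup.centralizer {x} ≤ Subgroup.center G :=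
    Subgroup.relIndex_eq_one.mp hrel1
  have hxZ : x ∈ Subgroup.center G := hCle hxC
  -- but then the class of x is a singleton, contradicting its size p^3
  have : conjClass x = {x} := by
    ext y
    constructor
    · rintro ⟨g, rfl⟩
      have := Subgroup.mem_center_iff.mp hxZ g
      simp only [Set.mem_singleton_iff]
      calc g⁻¹ * x * g = g⁻¹ * (x * g) := by group
      _ = g⁻¹ * (g * x) := by rw [this]
      _ = x := by group
    · rintro rfl; exact mem_conjClass_self _
  rw [this, Nat.card_coe_set_eq, Set.ncard_singleton] at hx
  have := hp.two_le
  omega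
end

section
/- Let G be a finite p-group of conjugate type {1, pⁿ}. Then the subgroup Ω₁(Z(G)) of elements of the center of order dividing p has order at least pⁿ. -/
open scoped commutatorElement

/-- In a finite p-group of conjugate type {1, pⁿ}, the subgroup of central elements of
order dividing p has order at least pⁿ. -/
theorem omega_center_lower_bound {p n : ℕ} [Fact p.Prime] (hn : 1 ≤ n)
    {G : Type*} [Group G] [Finite G] (hG : IsPGroup p G)
    (ht : IsConjugateType G (p ^ n)) :
    p ^ n ≤ Nat.card {z : G | z ∈ Subgroup.center G ∧ z ^ p = 1} := by
  classical
  have hp : p.Prime := Fact.out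
  have hpn1 : 1 < p ^ n := Nat.one_lt_pow (by omega) hp.one_lt
  -- a class of card one is central
  have hcentral : ∀ x : G, Nat.card (conjClass x) = 1 → x ∈ Subgroup.center G := by
    intro x hx
    rw [Nat.card_eq_one_iff_exists] at hx
    obtain ⟨⟨a, ha⟩, hall⟩ := hx
    rw [Subgroup.mem_center_iff]
    intro g
    have h1 : (⟨g⁻¹ * x * g, ⟨g, rfl⟩⟩ : conjClass x) = ⟨a, ha⟩ := hall _
    have h2 : (⟨x, ⟨1, by group⟩⟩ : conjClass x) = ⟨a, ha⟩ := hall _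
    have h3 : g⁻¹ * x * g = x := by
      have := h1.trans h2.symm
      simpa using congrArg Subtype.val this
    have h4 : x * g = g * x := by
      simpa [mul_assoc] using congrArg (fun t => g * t) h3
    exact h4.symm
  -- G is nonabelian: get a noncentral element
  obtain ⟨x₀, hx₀⟩ := ht.2
  have hx₀Z : x₀ ∉ Subgroup.center G := by
    intro h
    have hone : conjClass x₀ = {x₀} := by
      ext y
      constructor
      · rintro ⟨g, rfl⟩
        have := (Subgroup.mem_center_iff.mp h) g
        simp only [Set.mem_singleton_iff]
        calc g⁻¹ * x₀ * g = g⁻¹ * (x₀ * g) := by group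
        _ = g⁻¹ * (g * x₀) := by rw [← this]
        _ = x₀ := by group
      · rintro rfl; exact ⟨1, by group⟩
    rw [hone] at hx₀
    simp at hx₀
    omega
  haveI : Nontrivial (G ⧸ Subgroup.center G) :=
    ⟨⟨QuotientGroup.mk x₀, 1, by
      simpa [QuotientGroup.eq_one_iff] using hx₀Z⟩⟩
  have hQ : IsPGroup p (G ⧸ Subgroup.center G) := hG.to_quotient _
  haveI := hQ.center_nontrivial
  obtain ⟨⟨y, hy⟩, hy1⟩ := exists_ne (1 : Subgroup.center (G ⧸ Subgroup.center G))
  have hyne : y ≠ 1 := by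
    intro h; exact hy1 (Subtype.ext h)
  obtain ⟨k, hk⟩ := hQ y
  have hdvd : orderOf y ∣ p ^ k := orderOf_dvd_of_pow_eq_one hk
  obtain ⟨m, _, hm⟩ := (Nat.dvd_prime_pow hp).mp hdvd
  have hm0 : m ≠ 0 := by
    intro h
    rw [h, pow_zero] at hm
    exact hyne (orderOf_eq_one_iff.mp hm)
  set z : G ⧸ Subgroup.center G := y ^ (p ^ (m - 1)) with hzdef
  have hz1 : z ≠ 1 := by
    intro h
    have : orderOf y ∣ p ^ (m - 1) := orderOf_dvd_of_pow_eq_one h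
    rw [hm] at this
    have := Nat.le_of_dvd (pow_pos hp.pos _) this
    have := pow_lt_pow_right₀ hp.one_lt (Nat.sub_lt (Nat.pos_of_ne_zero hm0) one_pos)
    omega
  have hzp : z ^ p = 1 := by
    rw [hzdef, ← pow_mul, ← pow_succ, Nat.sub_add_cancel (Nat.pos_of_ne_zero hm0), ← hm]
    exact pow_orderOf_eq_one y
  have hzc : z ∈ Subgroup.center (G ⧸ Subgroup.center G) := Subgroup.pow_mem _ hy _
  obtain ⟨x, hx⟩ := QuotientGroup.mk_surjective z
  -- x is not central
  have hxZ : x ∉ Subgroup.center G := by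
    intro h
    apply hz1
    rw [← hx, QuotientGroup.eq_one_iff]
    exact h
  -- x^p is central
  have hxpZ : x ^ p ∈ Subgroup.center G := by
    rw [← QuotientGroup.eq_one_iff]
    show QuotientGroup.mk (x ^ p) = 1
    rw [QuotientGroup.mk_pow, hx, hzp]
  -- each commutator x⁻¹ * (g⁻¹ x g) is central
  have hcZ : ∀ g : G, x⁻¹ * (g⁻¹ * x * g) ∈ Subgroup.center G := by
    intro g
    rw [← QuotientGroup.eq_one_iff]
    show QuotientGroup.mk (x⁻¹ * (g⁻¹ * x * g)) = 1
    have : (QuotientGroup.mk (x⁻¹ * (g⁻¹ * x * g)) : G ⧸ Subgroup.center G)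
        = z⁻¹ * ((QuotientGroup.mk g)⁻¹ * z * QuotientGroup.mk g) := by
      rw [← hx]; rfl
    have key : (QuotientGroup.mk g : G ⧸ Subgroup.center G)⁻¹ * z * QuotientGroup.mk g = z := by
      rw [mul_assoc, ← Subgroup.mem_center_iff.mp hzc (QuotientGroup.mk g), inv_mul_cancel_left]
    rw [this, key, inv_mul_cancel]
  -- and has order dividing p
  have hcp : ∀ g : G, (x⁻¹ * (g⁻¹ * x * g)) ^ p = 1 := by
    intro g
    set c := x⁻¹ * (g⁻¹ * x * g) with hcdef
    have hxc : g⁻¹ * x * g = x * c := by rw [hcdef]; group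
    have hcomm : Commute x c := Subgroup.mem_center_iff.mp (hcZ g) x
    have h1 : (g⁻¹ * x * g) ^ p = g⁻¹ * x ^ p * g := by
      have := conj_pow (a := g⁻¹) (b := x) (i := p)
      simpa using this
    have h2 : g⁻¹ * x ^ p * g = x ^ p := by
      have := Subgroup.mem_center_iff.mp hxpZ g
      calc g⁻¹ * x ^ p * g = g⁻¹ * (x ^ p * g) := by group
      _ = g⁻¹ * (g * x ^ p) := by rw [← this]
      _ = x ^ p := by group
    have h3 : x ^ p * c ^ p = x ^ p := by
      rw [← hcomm.mul_pow, ← hxc, h1, h2]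
    exact mul_left_cancel (by rw [h3, mul_one])
  -- the injection from the class of x
  set S := {z : G | z ∈ Subgroup.center G ∧ z ^ p = 1} with hSdef
  have hf : ∀ y : conjClass x, (x⁻¹ * (y : G)) ∈ S := by
    rintro ⟨y, g, rfl⟩
    exact ⟨hcZ g, hcp g⟩
  have hinj : Function.Injective (fun y : conjClass x => (⟨x⁻¹ * (y : G), hf y⟩ : S)) := by
    rintro ⟨a, ha⟩ ⟨b, hb⟩ h
    simp only [Subtype.mk.injEq] at h ⊢
    exact mul_left_cancel h
  have hcard : Nat.card (conjClass x) ≤ Nat.card S := Nat.card_le_card_of_injective _ hinj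
  have hxcard : Nat.card (conjClass x) = p ^ n := by
    rcases ht.1 x with h | h
    · exact absurd (hcentral x h) hxZ
    · exact h
  rw [← hxcard]
  exact hcard
end

section
/- Let H be a finite Camina p-group of nilpotency class 2 with |[H,H]| = p^m ≥ p³, and let A ≤ [H,H] be a subgroup of order p^{m-3}. Then H/A is a Camina group of conjugate type {1, p³}. -/
open scoped commutatorElement

/-- Any conjugacy class sits inside the corresponding commutator coset. -/
lemma conjClass_subset {G : Type*} [Group G] (x : G) :
    conjClass x ⊆ (fun c => x * c) '' (commutator G : Set G) := by
  rintro y ⟨g, rfl⟩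
  refine ⟨⁅x⁻¹, g⁻¹⁆, Subgroup.commutator_mem_commutator (Subgroup.mem_top _) (Subgroup.mem_top _), ?_⟩
  simp [commutatorElement_def]
  group

/-- Quotient of a class-2 Camina p-group with |H'| = p^m ≥ p³ by a subgroup of H' of
order p^{m-3} is a Camina group of conjugate type {1, p³}. -/
theorem camina_quotient_conjugate_type {p m : ℕ} [Fact p.Prime]
    {H : Type*} [Group H] [Finite H] (hG : IsPGroup p H) (hC : IsCamina H)
    (hcl : (⊤ : Subgroup H).lowerCentralSeries 2 = ⊥ ∧ (⊤ : Subgroup H).lowerCentralSeries 1 ≠ ⊥)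
    (hm : 3 ≤ m) (hcard : Nat.card (commutator H) = p ^ m)
    (A : Subgroup H) [A.Normal] (hA : A ≤ commutator H)
    (hAcard : Nat.card A = p ^ (m - 3)) :
    IsCamina (H ⧸ A) ∧ IsConjugateType (H ⧸ A) (p ^ 3) := by
  have hp : p.Prime := Fact.out
  -- the commutator subgroup is central (class 2)
  have hcent : ∀ c ∈ commutator H, ∀ g : H, c * g = g * c := by
    intro c hc g
    have h2 : (⊤ : Subgroup H).lowerCentralSeries 2 = ⁅commutator H, (⊤ : Subgroup H)⁆ := by
      rw [← Subgroup.top_lowerCentralSeries_one]; rfl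
    have : ⁅c, g⁆ ∈ (⊥ : Subgroup H) := by
      rw [← hcl.1, h2]
      exact Subgroup.commutator_mem_commutator hc (Subgroup.mem_top g)
    rw [Subgroup.mem_bot, commutatorElement_eq_one_iff_mul_comm] at this
    exact this
  -- the commutator of the quotient is the image of the commutator
  set π : H →* H ⧸ A := QuotientGroup.mk' A with hπ
  have hsurj : Function.Surjective π := QuotientGroup.mk'_surjective A
  have hmapcomm : commutator (H ⧸ A) = (commutator H).map π := by
    rw [commutator_def, commutator_def, Subgroup.map_commutator,
      Subgroup.map_top_of_surjective π hsurj]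
  -- membership characterization
  have hmem : ∀ x : H, (π x ∈ commutator (H ⧸ A)) ↔ x ∈ commutator H := by
    intro x
    rw [hmapcomm]
    constructor
    · intro hx
      have : x ∈ Subgroup.comap π ((commutator H).map π) := hx
      rw [Subgroup.comap_map_eq] at this
      rwa [hπ, QuotientGroup.ker_mk', sup_of_le_left hA] at this
    · exact fun hx => Subgroup.mem_map_of_mem π hx
  -- card of the commutator of the quotient is p^3
  have hcardQ : Nat.card (commutator (H ⧸ A)) = p ^ 3 := by
    set f := π.comp (commutator H).subtype with hf
    have hrange : f.range = (commutator H).map π := by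
      rw [hf, MonoidHom.range_comp, Subgroup.range_subtype]
    have hker : f.ker = A.subgroupOf (commutator H) := by
      rw [hf, ← MonoidHom.comap_ker, hπ, QuotientGroup.ker_mk']; rfl
    have hkercard : Nat.card f.ker = p ^ (m - 3) := by
      rw [hker, ← hAcard]
      exact Nat.card_congr (Subgroup.subgroupOfEquivOfLe hA).toEquiv
    have h1 : Nat.card (commutator H) =
        Nat.card ((commutator H) ⧸ f.ker) * Nat.card f.ker :=
      Subgroup.card_eq_card_quotient_mul_card_subgroup f.ker
    have h2 : Nat.card ((commutator H) ⧸ f.ker) = Nat.card f.range :=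
      Nat.card_congr (QuotientGroup.quotientKerEquivRange f).toEquiv
    have h3 : Nat.card (commutator (H ⧸ A)) = Nat.card ((commutator H) ⧸ f.ker) := by
      rw [h2, hrange, hmapcomm]
    rw [h3]
    have hpow : p ^ m = p ^ 3 * p ^ (m - 3) := by
      rw [← pow_add]; congr 1; omega
    have := h1
    rw [hcard, hkercard, hpow] at this
    have hpos : 0 < p ^ (m - 3) := Nat.pow_pos hp.pos
    exact (Nat.eq_of_mul_eq_mul_right hpos this.symm)
  -- the quotient is a Camina group
  have hCam : IsCamina (H ⧸ A) := by
    intro xb hxb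
    obtain ⟨x, rfl⟩ := hsurj xb
    have hx : x ∉ commutator H := fun h => hxb ((hmem x).mpr h)
    apply Set.Subset.antisymm (conjClass_subset _)
    rintro y ⟨cb, hcb, rfl⟩
    rw [hmapcomm] at hcb
    obtain ⟨c, hc, rfl⟩ := hcb
    have : x * c ∈ conjClass x := by
      rw [hC x hx]; exact ⟨c, hc, rfl⟩
    obtain ⟨g, hg⟩ := this
    exact ⟨π g, by rw [← map_inv, ← map_mul, ← map_mul, hg, map_mul]⟩
  refine ⟨hCam, ?_, ?_⟩
  · intro xb
    obtain ⟨x, rfl⟩ := hsurj xb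
    by_cases hx : x ∈ commutator H
    · left
      have : conjClass (π x) = {π x} := by
        ext y
        constructor
        · rintro ⟨gb, rfl⟩
          obtain ⟨g, rfl⟩ := hsurj gb
          have : g⁻¹ * x * g = x := by
            rw [mul_assoc, hcent x hx g, ← mul_assoc]; group
          rw [← map_inv, ← map_mul, ← map_mul, this]
          rfl
        · rintro rfl
          exact ⟨1, by group⟩
      rw [this]
      simp
    · right
      have hxb : π x ∉ commutator (H ⧸ A) := fun h => hx ((hmem x).mp h)
      rw [hCam (π x) hxb, ← hcardQ]
      rw [Nat.card_image_of_injective (mul_right_injective (π x))]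
      exact Nat.card_congr (Equiv.setCongr rfl)
  · -- existence: some element lies outside the commutator of the quotient
    have hne : commutator H ≠ ⊤ := by
      intro htop
      have hbot : commutator H ≤ ⊥ := by
        rw [commutator_def, Subgroup.commutator_le]
        intro g₁ _ g₂ _
        rw [Subgroup.mem_bot, commutatorElement_eq_one_iff_mul_comm]
        exact hcent g₁ (htop ▸ Subgroup.mem_top g₁) g₂
      have : Nat.card (commutator H) = 1 := by
        rw [le_bot_iff.mp hbot]; exact Nat.card_eq_one_iff_unique.mpr ⟨inferInstance, inferInstance⟩
      rw [hcard] at this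
      have : 1 < p ^ m := Nat.one_lt_pow (by omega) hp.one_lt
      omega
    obtain ⟨x, hx⟩ : ∃ x : H, x ∉ commutator H := by
      by_contra h
      push_neg at h
      exact hne ((Subgroup.eq_top_iff' _).mpr h)
    refine ⟨π x, ?_⟩
    have hxb : π x ∉ commutator (H ⧸ A) := fun h => hx ((hmem x).mp h)
    rw [hCam (π x) hxb, ← hcardQ]
    rw [Nat.card_image_of_injective (mul_right_injective (π x))]
    exact Nat.card_congr (Equiv.setCongr rfl)
end

section
/- Let p be an odd prime and G a finite special p-group (Z(G) = [G,G] = Φ(G), both elementary abelian) of conjugate type {1, pⁿ}. Then there exists a group H of exponent p that is isoclinic to G. -/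
open scoped commutatorElement

/-- A special `p`-group: center = derived = Frattini subgroup, with central quotient
and center elementary abelian. -/
def IsSpecialPGroup (p : ℕ) (G : Type*) [Group G] : Prop :=
  IsPGroup p G ∧ Subgroup.center G = commutator G ∧ frattini G = commutator G ∧
  (∀ a : G ⧸ Subgroup.center G, a ^ p = 1) ∧ (∀ a ∈ Subgroup.center G, a ^ p = 1)


open scoped IsMulCommutative

namespace SpecAux
variable {G : Type*} [Group G]

theorem conj_mul (x y : G) : x * y * x⁻¹ = ⁅x, y⁆ * y := by
  rw [commutatorElement_def]; group

variable (hZ : ∀ x y : G, ⁅x, y⁆ ∈ Subgroup.center G)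
include hZ

theorem cc (x y g : G) : g * ⁅x, y⁆ = ⁅x, y⁆ * g :=
  Subgroup.mem_center_iff.mp (hZ x y) g

theorem c_mul_left (x y z : G) : ⁅x * y, z⁆ = ⁅x, z⁆ * ⁅y, z⁆ := by
  have h1 : ⁅x * y, z⁆ = x * (y * z * y⁻¹) * x⁻¹ * z⁻¹ := by
    rw [commutatorElement_def]; group
  rw [h1, conj_mul y z]
  calc x * (⁅y, z⁆ * z) * x⁻¹ * z⁻¹ = (x * ⁅y, z⁆) * (z * x⁻¹ * z⁻¹) := by group
  _ = (⁅y, z⁆ * x) * (z * x⁻¹ * z⁻¹) := by rw [cc hZ]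
  _ = ⁅y, z⁆ * ⁅x, z⁆ := by rw [commutatorElement_def]; group
  _ = ⁅x, z⁆ * ⁅y, z⁆ := by rw [cc hZ]

theorem c_mul_right (x y z : G) : ⁅x, y * z⁆ = ⁅x, y⁆ * ⁅x, z⁆ := by
  have := congrArg (·⁻¹) (c_mul_left hZ y z x)
  simp only [commutatorElement_inv, mul_inv_rev] at this
  rw [this, cc hZ]

omit hZ in theorem c_one_left (z : G) : ⁅(1 : G), z⁆ = 1 := by
  simp [commutatorElement_def]

omit hZ in theorem c_one_right (z : G) : ⁅z, (1 : G)⁆ = 1 := by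
  simp [commutatorElement_def]

theorem c_inv_left (x z : G) : ⁅x⁻¹, z⁆ = ⁅x, z⁆⁻¹ := by
  have h := c_mul_left hZ x x⁻¹ z
  rw [mul_inv_cancel] at h
  rw [c_one_left] at h
  exact eq_inv_of_mul_eq_one_right h.symm

theorem c_inv_right (x z : G) : ⁅x, z⁻¹⁆ = ⁅x, z⁆⁻¹ := by
  have h := c_mul_right hZ x z z⁻¹
  rw [mul_inv_cancel, c_one_right] at h
  exact eq_inv_of_mul_eq_one_right h.symm

omit hZ in theorem c_central_left (z y : G) (hz : z ∈ Subgroup.center G) : ⁅z, y⁆ = 1 :=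
  commutatorElement_eq_one_iff_commute.mpr ((Subgroup.mem_center_iff.mp hz y).symm)

omit hZ in theorem c_central_right (x z : G) (hz : z ∈ Subgroup.center G) : ⁅x, z⁆ = 1 :=
  commutatorElement_eq_one_iff_commute.mpr (Subgroup.mem_center_iff.mp hz x)

theorem c_invariant (x y z w : G) (hz : z ∈ Subgroup.center G) (hw : w ∈ Subgroup.center G) :
    ⁅x * z, y * w⁆ = ⁅x, y⁆ := by
  rw [c_mul_left hZ, c_mul_right hZ, c_mul_right hZ, c_central_left z y hz,
    c_central_left z w hz, c_central_right x w hw]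
  simp

/-- The commutator map on the central quotient, valued in the center. -/
def cQ (a b : G ⧸ Subgroup.center G) : Subgroup.center G :=
  Quotient.liftOn₂' a b (fun x y => (⟨⁅x, y⁆, hZ x y⟩ : Subgroup.center G))
    (by
      intro x y x' y' hx hy
      rw [QuotientGroup.leftRel_apply] at hx hy
      have hx' : x' = x * (x⁻¹ * x') := by group
      have hy' : y' = y * (y⁻¹ * y') := by group
      ext
      show ⁅x, y⁆ = ⁅x', y'⁆
      conv_rhs => rw [hx', hy']
      rw [c_invariant hZ x y _ _ hx hy])

theorem cQ_mk (x y : G) :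
    cQ hZ (QuotientGroup.mk x) (QuotientGroup.mk y) = ⟨⁅x, y⁆, hZ x y⟩ := rfl

theorem cQ_mul_left (a b d : G ⧸ Subgroup.center G) :
    cQ hZ (a * b) d = cQ hZ a d * cQ hZ b d := by
  induction a using QuotientGroup.induction_on
  induction b using QuotientGroup.induction_on
  induction d using QuotientGroup.induction_on
  ext; exact c_mul_left hZ _ _ _

theorem cQ_mul_right (a b d : G ⧸ Subgroup.center G) :
    cQ hZ a (b * d) = cQ hZ a b * cQ hZ a d := by
  induction a using QuotientGroup.induction_on
  induction b using QuotientGroup.induction_on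
  induction d using QuotientGroup.induction_on
  ext; exact c_mul_right hZ _ _ _

theorem cQ_one_left (b : G ⧸ Subgroup.center G) : cQ hZ 1 b = 1 := by
  induction b using QuotientGroup.induction_on
  ext; exact c_one_left _

theorem cQ_one_right (a : G ⧸ Subgroup.center G) : cQ hZ a 1 = 1 := by
  induction a using QuotientGroup.induction_on
  ext; exact c_one_right _

theorem cQ_self (a : G ⧸ Subgroup.center G) : cQ hZ a a = 1 := by
  induction a using QuotientGroup.induction_on
  refine Subtype.ext ?_
  show ⁅_, _⁆ = 1
  rw [commutatorElement_def]; group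

theorem cQ_swap (a b : G ⧸ Subgroup.center G) : cQ hZ a b * cQ hZ b a = 1 := by
  induction a using QuotientGroup.induction_on
  induction b using QuotientGroup.induction_on
  ext
  show ⁅_, _⁆ * ⁅_, _⁆ = 1
  rw [commutatorElement_def, commutatorElement_def]; group

theorem cQ_inv_left (a b : G ⧸ Subgroup.center G) : cQ hZ a⁻¹ b = (cQ hZ a b)⁻¹ := by
  induction a using QuotientGroup.induction_on
  induction b using QuotientGroup.induction_on
  ext; exact c_inv_left hZ _ _

theorem cQ_pow_left (a : G ⧸ Subgroup.center G) (k : ℕ) : cQ hZ (a ^ k) a = 1 := by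
  induction k with
  | zero => simpa using cQ_one_left hZ a
  | succ k ih => rw [pow_succ, cQ_mul_left hZ, ih, cQ_self hZ, mul_one]

/-- The underlying type of the exponent-`p` replacement group. -/
def PG (G : Type*) [Group G] (_hZ : ∀ x y : G, ⁅x, y⁆ ∈ Subgroup.center G) : Type _ :=
  (G ⧸ Subgroup.center G) × (Subgroup.center G)

instance : Group (PG G hZ) where
  mul A B := (A.1 * B.1, A.2 * B.2 * cQ hZ A.1 B.1)
  one := (1, 1)
  inv A := (A.1⁻¹, A.2⁻¹)
  mul_assoc A B C := by
    show (_, _) = (_, _)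
    refine Prod.ext (mul_assoc _ _ _) ?_
    show A.2 * B.2 * cQ hZ A.1 B.1 * C.2 * cQ hZ (A.1 * B.1) C.1
        = A.2 * (B.2 * C.2 * cQ hZ B.1 C.1) * cQ hZ A.1 (B.1 * C.1)
    rw [cQ_mul_left hZ, cQ_mul_right hZ]
    simp [mul_assoc, mul_comm, mul_left_comm]
  one_mul A := by
    show (_, _) = A
    refine Prod.ext (one_mul _) ?_
    show 1 * A.2 * cQ hZ 1 A.1 = A.2
    rw [cQ_one_left hZ, one_mul, mul_one]
  mul_one A := by
    show (_, _) = A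
    refine Prod.ext (mul_one _) ?_
    show A.2 * 1 * cQ hZ A.1 1 = A.2
    rw [cQ_one_right hZ, mul_one, mul_one]
  inv_mul_cancel A := by
    show (_, _) = (1, 1)
    refine Prod.ext (inv_mul_cancel _) ?_
    show A.2⁻¹ * A.2 * cQ hZ A.1⁻¹ A.1 = 1
    rw [cQ_inv_left hZ, cQ_self hZ, inv_mul_cancel, inv_one, mul_one]

theorem pg_mul_def (A B : PG G hZ) :
    A * B = (A.1 * B.1, A.2 * B.2 * cQ hZ A.1 B.1) := rfl

theorem pg_one_def : (1 : PG G hZ) = (1, 1) := rfl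

theorem pg_inv_def (A : PG G hZ) : A⁻¹ = (A.1⁻¹, A.2⁻¹) := rfl

theorem pg_pow (A : PG G hZ) (k : ℕ) : A ^ k = (A.1 ^ k, A.2 ^ k) := by
  induction k with
  | zero => rw [pow_zero, pow_zero, pow_zero]; rfl
  | succ k ih =>
      rw [pow_succ, ih]
      refine Prod.ext (pow_succ _ _).symm ?_
      show A.2 ^ k * A.2 * cQ hZ (A.1 ^ k) A.1 = A.2 ^ (k + 1)
      rw [cQ_pow_left hZ, mul_one, pow_succ]

theorem V_comm (a b : G ⧸ Subgroup.center G) : a * b = b * a := by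
  induction a using QuotientGroup.induction_on with | H x =>
  induction b using QuotientGroup.induction_on with | H y =>
  show QuotientGroup.mk (x * y) = QuotientGroup.mk (y * x)
  rw [QuotientGroup.eq]
  have : (x * y)⁻¹ * (y * x) = ⁅y⁻¹, x⁻¹⁆ := by rw [commutatorElement_def]; group
  rw [this]; exact hZ _ _

theorem cQ_swap' (a b : G ⧸ Subgroup.center G) : cQ hZ b a = (cQ hZ a b)⁻¹ := by
  induction a using QuotientGroup.induction_on
  induction b using QuotientGroup.induction_on
  ext
  show ⁅_, _⁆ = (⁅_, _⁆)⁻¹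
  rw [commutatorElement_def, commutatorElement_def]; group

theorem cQ_inv_right (a b : G ⧸ Subgroup.center G) : cQ hZ a b⁻¹ = (cQ hZ a b)⁻¹ := by
  induction a using QuotientGroup.induction_on
  induction b using QuotientGroup.induction_on
  ext; exact c_inv_right hZ _ _

theorem pg_commutator (A B : PG G hZ) :
    ⁅A, B⁆ = (1, (cQ hZ A.1 B.1) ^ 2) := by
  have hV : A.1 * B.1 * A.1⁻¹ * B.1⁻¹ = 1 := by
    rw [V_comm hZ A.1 B.1]; group
  show A * B * A⁻¹ * B⁻¹ = _
  rw [pg_inv_def, pg_inv_def]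
  refine Prod.ext hV ?_
  show A.2 * B.2 * cQ hZ A.1 B.1 * A.2⁻¹ * cQ hZ (A.1 * B.1) A.1⁻¹ * B.2⁻¹ *
      cQ hZ (A.1 * B.1 * A.1⁻¹) B.1⁻¹ = (cQ hZ A.1 B.1) ^ 2
  have h1 : cQ hZ (A.1 * B.1) A.1⁻¹ = cQ hZ A.1 B.1 := by
    rw [cQ_inv_right hZ, cQ_mul_left hZ, cQ_self hZ, one_mul, cQ_swap' hZ, inv_inv]
  have h2 : cQ hZ (A.1 * B.1 * A.1⁻¹) B.1⁻¹ = 1 := by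
    rw [cQ_inv_right hZ, cQ_mul_left hZ, cQ_mul_left hZ, cQ_self hZ, mul_one,
      cQ_inv_left hZ]
    group
  rw [h1, h2, mul_one]
  set c := cQ hZ A.1 B.1 with hc
  rw [mul_comm (A.2 * B.2 * c) A.2⁻¹, ← mul_assoc A.2⁻¹ (A.2 * B.2) c,
    ← mul_assoc A.2⁻¹ A.2 B.2, inv_mul_cancel, one_mul,
    mul_comm (B.2 * c * c) B.2⁻¹, ← mul_assoc B.2⁻¹ (B.2 * c) c,
    ← mul_assoc B.2⁻¹ B.2 c, inv_mul_cancel, one_mul, pow_two]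

/-- Projection onto the first coordinate. -/
def pgFst : PG G hZ →* G ⧸ Subgroup.center G where
  toFun A := A.1
  map_one' := rfl
  map_mul' _ _ := rfl

theorem pgFst_surjective : Function.Surjective (pgFst hZ) := fun a => ⟨(a, 1), rfl⟩

section WithExp
variable {p : ℕ} (hp : Odd p) (hWp : ∀ w : Subgroup.center G, w ^ p = 1)
include hp hWp

omit hZ in
theorem w_sq_eq_one {w : Subgroup.center G} (h : w ^ 2 = 1) : w = 1 := by
  obtain ⟨k, hk⟩ := hp
  have hwp : w ^ p = (w ^ 2) ^ k * w := by rw [← pow_mul, ← pow_succ, hk]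
  rw [h, one_pow, one_mul] at hwp
  rw [← hwp, hWp]

theorem pg_center_eq_ker :
    Subgroup.center (PG G hZ) = MonoidHom.ker (pgFst hZ) := by
  ext A
  rw [Subgroup.mem_center_iff, MonoidHom.mem_ker]
  constructor
  · intro hA
    show A.1 = 1
    obtain ⟨x, hx⟩ := QuotientGroup.mk_surjective A.1
    rw [← hx, QuotientGroup.eq_one_iff]
    rw [Subgroup.mem_center_iff]
    intro y
    have h := hA ((QuotientGroup.mk y : G ⧸ Subgroup.center G), 1)
    have h2 : 1 * A.2 * cQ hZ (QuotientGroup.mk y) A.1 = A.2 * 1 * cQ hZ A.1 (QuotientGroup.mk y) :=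
      (Prod.ext_iff.mp h).2
    simp only [one_mul, mul_one] at h2
    -- h2 : 1 * A.2 * cQ hZ (mk y) A.1 = A.2 * 1 * cQ hZ A.1 (mk y)
    have h3 : cQ hZ (QuotientGroup.mk y) A.1 = cQ hZ A.1 (QuotientGroup.mk y) :=
      mul_left_cancel h2
    rw [cQ_swap' hZ] at h3
    have h4 : (cQ hZ A.1 (QuotientGroup.mk y)) ^ 2 = 1 := by
      rw [pow_two]; exact mul_eq_one_iff_inv_eq.mpr h3
    have h5 := w_sq_eq_one hp hWp h4
    rw [← hx, cQ_mk] at h5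
    have := congrArg Subtype.val h5
    simp only [OneMemClass.coe_one] at this
    exact (commutatorElement_eq_one_iff_commute.mp this).symm
  · intro hA B
    have h1 : A.1 = 1 := hA
    refine Prod.ext ?_ ?_
    · show B.1 * A.1 = A.1 * B.1
      exact V_comm hZ _ _
    · show B.2 * A.2 * cQ hZ B.1 A.1 = A.2 * B.2 * cQ hZ A.1 B.1
      rw [h1, cQ_one_left hZ, cQ_one_right hZ, mul_comm B.2 A.2]

end WithExp

/-- The central embedding `w ↦ (1, w)`. -/
def pgJ : (Subgroup.center G) →* PG G hZ where
  toFun w := (1, w)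
  map_one' := rfl
  map_mul' w w' := by
    refine Prod.ext (one_mul 1).symm ?_
    show w * w' = w * w' * cQ hZ 1 1
    rw [cQ_one_left hZ, mul_one]

theorem pg_commutator_le_range :
    commutator (PG G hZ) ≤ (pgJ hZ).range := by
  rw [commutator_def]
  rw [Subgroup.commutator_le]
  intro A _ B _
  rw [pg_commutator hZ]
  exact ⟨(cQ hZ A.1 B.1) ^ 2, rfl⟩

section Full
variable {p : ℕ} (hp : Odd p) (hWp : ∀ w : Subgroup.center G, w ^ p = 1)
  (hZC : Subgroup.center G = commutator G)
include hp hWp hZC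

theorem pgJ_mem_commutator (w : Subgroup.center G) :
    pgJ hZ w ∈ commutator (PG G hZ) := by
  obtain ⟨k, hk⟩ := hp
  -- first: every (1, ⟨⁅x,y⁆⟩) is in the commutator subgroup
  have key : ∀ x y : G, pgJ hZ ⟨⁅x, y⁆, hZ x y⟩ ∈ commutator (PG G hZ) := by
    intro x y
    set A : PG G hZ := ((QuotientGroup.mk x : G ⧸ Subgroup.center G), (1 : Subgroup.center G))
    set B : PG G hZ := ((QuotientGroup.mk y : G ⧸ Subgroup.center G), (1 : Subgroup.center G))
    have hc : ⁅A, B⁆ ^ (k + 1) = pgJ hZ ⟨⁅x, y⁆, hZ x y⟩ := by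
      rw [pg_commutator hZ]
      refine (pg_pow hZ ((1 : G ⧸ Subgroup.center G), cQ hZ A.1 B.1 ^ 2) (k + 1)).trans ?_
      refine Prod.ext (one_pow _) ?_
      show ((cQ hZ A.1 B.1) ^ 2) ^ (k + 1) = _
      show ((cQ hZ (QuotientGroup.mk x) (QuotientGroup.mk y)) ^ 2) ^ (k + 1) = _
      rw [cQ_mk hZ, ← pow_mul]
      set c : Subgroup.center G := ⟨⁅x, y⁆, hZ x y⟩
      have : 2 * (k + 1) = p + 1 := by omega
      rw [this, pow_succ, hWp, one_mul]; rfl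
    rw [← hc]
    exact pow_mem (Subgroup.commutator_mem_commutator (Subgroup.mem_top _) (Subgroup.mem_top _)) _
  -- transfer along `commutator G = center G`
  set T : Subgroup (Subgroup.center G) :=
    Subgroup.comap (pgJ hZ) (commutator (PG G hZ)) with hT
  have hS : commutator G ≤ Subgroup.map (Subgroup.center G).subtype T := by
    rw [commutator_def, Subgroup.commutator_le]
    intro x _ y _
    exact ⟨⟨⁅x, y⁆, hZ x y⟩, key x y, rfl⟩
  have hw : (w : G) ∈ Subgroup.map (Subgroup.center G).subtype T :=
    hS (hZC ▸ w.2)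
  obtain ⟨u, hu, huw⟩ := hw
  have : u = w := Subtype.ext huw
  rw [← this]
  exact hu

end Full
section Transport
omit hZ

/-- An instance-free universe-polymorphic carrier of cardinality `n`. -/
def Carrier (n : ℕ) : Type _ := ULift (Fin n)

def carrierEquiv (n : ℕ) : Carrier.{u} n ≃ Fin n := Equiv.ulift

theorem comm_central_inv {H : Type*} [Group H] (x y z w : H)
    (hz : z ∈ Subgroup.center H) (hw : w ∈ Subgroup.center H) :
    ⁅x * z, y * w⁆ = ⁅x, y⁆ := by
  have hz' := Subgroup.mem_center_iff.mp hz
  have hw' := Subgroup.mem_center_iff.mp hw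
  have h1 : ⁅x * z, y * w⁆ = x * (z * (y * w) * z⁻¹) * x⁻¹ * (y * w)⁻¹ := by
    rw [commutatorElement_def]; group
  rw [h1, ← hz' (y * w)]
  have h2 : x * (y * w * z * z⁻¹) * x⁻¹ * (y * w)⁻¹ = x * y * (w * x⁻¹ * w⁻¹) * y⁻¹ := by
    group
  rw [h2, ← hw' x⁻¹, commutatorElement_def]
  group

theorem map_center {K H : Type*} [Group K] [Group H] (f : K ≃* H) :
    (Subgroup.center K).map f.toMonoidHom = Subgroup.center H := by
  ext h
  simp only [Subgroup.mem_map]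
  constructor
  · rintro ⟨z, hz, rfl⟩
    rw [Subgroup.mem_center_iff] at hz ⊢
    intro g
    have h1 := congrArg f (hz (f.symm g))
    simpa using h1
  · intro hh
    refine ⟨f.symm h, ?_, by simp⟩
    rw [Subgroup.mem_center_iff] at hh ⊢
    intro g
    have h1 := congrArg f.symm (hh (f g))
    simpa using h1

theorem isoclinic_congr {G K H : Type*} [Group G] [Group K] [Group H] (f : K ≃* H)
    (h : Isoclinic G K) : Isoclinic G H := by
  obtain ⟨φ, θ, hcom⟩ := h
  have hcen : (Subgroup.center K).map (f : K →* H) = Subgroup.center H := map_center f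
  have hcomm : (commutator K).map f.toMonoidHom = commutator H := by
    rw [commutator_def, Subgroup.map_commutator, commutator_def,
      Subgroup.map_top_of_surjective _ f.surjective]
  refine ⟨φ.trans (QuotientGroup.congr _ _ f hcen),
    θ.trans (((commutator K).equivMapOfInjective f.toMonoidHom f.injective).trans
      (MulEquiv.subgroupCongr hcomm)), ?_⟩
  intro x y x' y' hx hy
  obtain ⟨x0, hx0⟩ := QuotientGroup.mk_surjective (φ (QuotientGroup.mk x))
  obtain ⟨y0, hy0⟩ := QuotientGroup.mk_surjective (φ (QuotientGroup.mk y))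
  have hx' : (QuotientGroup.mk (f x0) : H ⧸ Subgroup.center H) = QuotientGroup.mk x' := by
    rw [← hx, MulEquiv.trans_apply, ← hx0, QuotientGroup.congr_mk]
  have hy' : (QuotientGroup.mk (f y0) : H ⧸ Subgroup.center H) = QuotientGroup.mk y' := by
    rw [← hy, MulEquiv.trans_apply, ← hy0, QuotientGroup.congr_mk]
  rw [QuotientGroup.eq] at hx' hy'
  have hx2 : x' = f x0 * ((f x0)⁻¹ * x') := by group
  have hy2 : y' = f y0 * ((f y0)⁻¹ * y') := by group
  have hval := hcom x y x0 y0 hx0.symm hy0.symm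
  show f ((θ ⟨⁅x, y⁆, _⟩ : K)) = ⁅x', y'⁆
  rw [hval]
  conv_rhs => rw [hx2, hy2, comm_central_inv _ _ _ _ hx' hy']
  exact map_commutatorElement _ _ _

end Transport

end SpecAux

/-- Every special p-group (p odd) of conjugate type {1, pⁿ} is isoclinic to a group of
exponent p. -/
theorem isoclinic_to_exponent_p {p n : ℕ} [Fact p.Prime] (hp : Odd p) (hn : 1 ≤ n)
    {G : Type*} [Group G] [Finite G] (hG : IsSpecialPGroup p G)
    (ht : IsConjugateType G (p ^ n)) :
    ∃ H : GrpCat, (∀ x : H, x ^ p = 1) ∧ Isoclinic G H := by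
  obtain ⟨hpg, hZC, hfr, hVp, hWp'⟩ := hG
  have hZ : ∀ x y : G, ⁅x, y⁆ ∈ Subgroup.center G := fun x y => by
    rw [hZC]
    exact Subgroup.commutator_mem_commutator (Subgroup.mem_top x) (Subgroup.mem_top y)
  have hWp : ∀ w : Subgroup.center G, w ^ p = 1 := fun w => Subtype.ext (by
    have h := hWp' w w.2
    simpa using h)
  have hfin : Finite (SpecAux.PG G hZ) :=
    inferInstanceAs (Finite ((G ⧸ Subgroup.center G) × (Subgroup.center G)))
  letI : Fintype (SpecAux.PG G hZ) := Fintype.ofFinite _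
  let e0 : SpecAux.Carrier (Fintype.card (SpecAux.PG G hZ)) ≃ SpecAux.PG G hZ :=
    (SpecAux.carrierEquiv _).trans (Fintype.equivFin (SpecAux.PG G hZ)).symm
  letI : Group (SpecAux.Carrier (Fintype.card (SpecAux.PG G hZ))) := e0.group
  let f : SpecAux.Carrier (Fintype.card (SpecAux.PG G hZ)) ≃* SpecAux.PG G hZ :=
    { e0 with map_mul' := fun a b => show e0 (e0.symm (e0 a * e0 b)) = e0 a * e0 b from
        e0.apply_symm_apply _ }
  have hKexp : ∀ A : SpecAux.PG G hZ, A ^ p = 1 := by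
    intro A
    rw [SpecAux.pg_pow hZ]
    refine Prod.ext ?_ ?_
    · exact hVp A.1
    · exact hWp A.2
  refine ⟨GrpCat.of (SpecAux.Carrier (Fintype.card (SpecAux.PG G hZ))), ?_, ?_⟩
  · intro x
    show x ^ p = 1
    have h := congrArg f.symm (hKexp (f x))
    rw [map_pow, MulEquiv.symm_apply_apply, map_one] at h
    exact h
  · -- the isoclinism
    refine SpecAux.isoclinic_congr f.symm ?_
    have hker := SpecAux.pg_center_eq_ker hZ hp hWp
    let ψ : ((SpecAux.PG G hZ) ⧸ Subgroup.center (SpecAux.PG G hZ)) ≃* (G ⧸ Subgroup.center G) :=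
      (QuotientGroup.quotientMulEquivOfEq hker).trans
        (QuotientGroup.quotientKerEquivOfSurjective _ (SpecAux.pgFst_surjective hZ))
    have hψ : ∀ A : SpecAux.PG G hZ, ψ (QuotientGroup.mk A) = A.1 := fun A => rfl
    obtain ⟨k, hk⟩ := hp
    have hsq : ∀ v : Subgroup.center G, (v ^ (k + 1)) ^ 2 = v := by
      intro v
      rw [← pow_mul]
      have h2 : (k + 1) * 2 = p + 1 := by omega
      rw [h2, pow_succ, hWp, one_mul]
    let e' : (Subgroup.center G) →* (commutator (SpecAux.PG G hZ)) :=
      { toFun := fun w => ⟨SpecAux.pgJ hZ (w ^ 2),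
          SpecAux.pgJ_mem_commutator hZ ⟨k, hk⟩ hWp hZC (w ^ 2)⟩
        map_one' := by
          refine Subtype.ext ?_
          show SpecAux.pgJ hZ (1 ^ 2) = 1
          rw [one_pow, map_one]
        map_mul' := fun w w' => by
          refine Subtype.ext ?_
          show SpecAux.pgJ hZ ((w * w') ^ 2) = SpecAux.pgJ hZ (w ^ 2) * SpecAux.pgJ hZ (w' ^ 2)
          rw [mul_pow, map_mul] }
    have hinj : Function.Injective e' := by
      intro w w' h
      have h1 : SpecAux.pgJ hZ (w ^ 2) = SpecAux.pgJ hZ (w' ^ 2) := congrArg Subtype.val h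
      have h2 : w ^ 2 = w' ^ 2 := congrArg Prod.snd h1
      have h3 : (w * w'⁻¹) ^ 2 = 1 := by
        rw [mul_pow, h2, ← mul_pow, mul_inv_cancel, one_pow]
      have h4 := SpecAux.w_sq_eq_one (G := G) ⟨k, hk⟩ hWp h3
      exact mul_inv_eq_one.mp h4
    have hsurj : Function.Surjective e' := by
      rintro ⟨A, hA⟩
      obtain ⟨v, hv⟩ := SpecAux.pg_commutator_le_range hZ hA
      refine ⟨v ^ (k + 1), Subtype.ext ?_⟩
      show SpecAux.pgJ hZ ((v ^ (k + 1)) ^ 2) = A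
      rw [hsq v, hv]
    let θ : (commutator G) ≃* (commutator (SpecAux.PG G hZ)) :=
      (MulEquiv.subgroupCongr hZC.symm).trans (MulEquiv.ofBijective e' ⟨hinj, hsurj⟩)
    refine ⟨ψ.symm, θ, ?_⟩
    intro x y x' y' hx hy
    have hx1 : (QuotientGroup.mk x : G ⧸ Subgroup.center G) = x'.1 := by
      have := congrArg ψ hx
      rw [MulEquiv.apply_symm_apply] at this
      rw [this]; exact hψ x'
    have hy1 : (QuotientGroup.mk y : G ⧸ Subgroup.center G) = y'.1 := by
      have := congrArg ψ hy
      rw [MulEquiv.apply_symm_apply] at this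
      rw [this]; exact hψ y'
    show SpecAux.pgJ hZ ((⟨⁅x, y⁆, hZ x y⟩ : Subgroup.center G) ^ 2) = ⁅x', y'⁆
    rw [SpecAux.pg_commutator hZ]
    refine Prod.ext ?_ ?_
    · show (1 : G ⧸ Subgroup.center G) = 1
      rfl
    · show (⟨⁅x, y⁆, hZ x y⟩ : Subgroup.center G) ^ 2 = (SpecAux.cQ hZ x'.1 y'.1) ^ 2
      rw [← hx1, ← hy1, SpecAux.cQ_mk hZ]
end
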